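/- Let (Ω, F, P) be a probability space, τ > 0, L ≥ 1. Let t_1,…,t_L : Ω → ℝ be random variables each uniformly distributed on [0,τ), and let a_1,…,a_L : Ω → ℂ be square-integrable random variables with E[a_l · conj(a_{l′})] = σ_a² if l = l′ and 0 if l ≠ l′, such that the random vector (a_1,…,a_L) is independent of (t_1,…,t_L). For integers k and complex numbers h_k, define the random variable X_k = (1/τ) h_k Σ_{l=1}^L a_l e^{−2πi k t_l/τ}. Then for all integers k, k′: E[X_k · conj(X_{k′})] = (σ_a² L/τ²) |h_k|² if k = k′, and E[X_k · conj(X_{k′})] = 0 if k ≠ k′. -/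

import Mathlib

open MeasureTheory ProbabilityTheory Real

/-- The integral of a product of two independent complex-valued integrable random
variables is the product of their integrals. -/
lemma indepFun_integral_mul_complex {Ω : Type*} [MeasurableSpace Ω] {μ : Measure Ω}
    {X Y : Ω → ℂ} (h : IndepFun X Y μ)
    (hX : Integrable X μ) (hY : Integrable Y μ) :
    ∫ ω, X ω * Y ω ∂μ = (∫ ω, X ω ∂μ) * ∫ ω, Y ω ∂μ := by
  have mre : Measurable fun z : ℂ => z.re := Complex.measurable_re
  have mim : Measurable fun z : ℂ => z.im := Complex.measurable_im
  have hXr : Integrable (fun ω => (X ω).re) μ := hX.re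
  have hXi : Integrable (fun ω => (X ω).im) μ := hX.im
  have hYr : Integrable (fun ω => (Y ω).re) μ := hY.re
  have hYi : Integrable (fun ω => (Y ω).im) μ := hY.im
  have i_rr : IndepFun (fun ω => (X ω).re) (fun ω => (Y ω).re) μ := h.comp mre mre
  have i_ri : IndepFun (fun ω => (X ω).re) (fun ω => (Y ω).im) μ := h.comp mre mim
  have i_ir : IndepFun (fun ω => (X ω).im) (fun ω => (Y ω).re) μ := h.comp mim mre
  have i_ii : IndepFun (fun ω => (X ω).im) (fun ω => (Y ω).im) μ := h.comp mim mim
  have p_rr : Integrable (fun ω => (X ω).re * (Y ω).re) μ := i_rr.integrable_mul hXr hYr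
  have p_ri : Integrable (fun ω => (X ω).re * (Y ω).im) μ := i_ri.integrable_mul hXr hYi
  have p_ir : Integrable (fun ω => (X ω).im * (Y ω).re) μ := i_ir.integrable_mul hXi hYr
  have p_ii : Integrable (fun ω => (X ω).im * (Y ω).im) μ := i_ii.integrable_mul hXi hYi
  have key : ∀ ω, X ω * Y ω =
      (((X ω).re * (Y ω).re - (X ω).im * (Y ω).im : ℝ) : ℂ) +
      (((X ω).re * (Y ω).im + (X ω).im * (Y ω).re : ℝ) : ℂ) * Complex.I := by
    intro ω
    simp [Complex.ext_iff, Complex.mul_re, Complex.mul_im]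
  have hsub : Integrable (fun ω => (X ω).re * (Y ω).re - (X ω).im * (Y ω).im) μ :=
    p_rr.sub p_ii
  have hadd : Integrable (fun ω => (X ω).re * (Y ω).im + (X ω).im * (Y ω).re) μ :=
    p_ri.add p_ir
  have e_rr : ∫ ω, (X ω).re * (Y ω).re ∂μ = (∫ ω, (X ω).re ∂μ) * ∫ ω, (Y ω).re ∂μ :=
    i_rr.integral_mul_eq_mul_integral hXr.aestronglyMeasurable hYr.aestronglyMeasurable
  have e_ri : ∫ ω, (X ω).re * (Y ω).im ∂μ = (∫ ω, (X ω).re ∂μ) * ∫ ω, (Y ω).im ∂μ :=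
    i_ri.integral_mul_eq_mul_integral hXr.aestronglyMeasurable hYi.aestronglyMeasurable
  have e_ir : ∫ ω, (X ω).im * (Y ω).re ∂μ = (∫ ω, (X ω).im ∂μ) * ∫ ω, (Y ω).re ∂μ :=
    i_ir.integral_mul_eq_mul_integral hXi.aestronglyMeasurable hYr.aestronglyMeasurable
  have e_ii : ∫ ω, (X ω).im * (Y ω).im ∂μ = (∫ ω, (X ω).im ∂μ) * ∫ ω, (Y ω).im ∂μ :=
    i_ii.integral_mul_eq_mul_integral hXi.aestronglyMeasurable hYi.aestronglyMeasurable
  have hXY : Integrable (fun ω => X ω * Y ω) μ := by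
    have h' : Integrable (fun ω => (((X ω).re * (Y ω).re - (X ω).im * (Y ω).im : ℝ) : ℂ)
        + (((X ω).re * (Y ω).im + (X ω).im * (Y ω).re : ℝ) : ℂ) * Complex.I) μ :=
      (hsub.ofReal).add ((hadd.ofReal).mul_const _)
    exact h'.congr (Filter.Eventually.of_forall fun ω => (key ω).symm)
  have hXre : (∫ ω, X ω ∂μ).re = ∫ ω, (X ω).re ∂μ := by
    simpa using (integral_re hX).symm
  have hXim : (∫ ω, X ω ∂μ).im = ∫ ω, (X ω).im ∂μ := by
    simpa using (integral_im hX).symm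
  have hYre : (∫ ω, Y ω ∂μ).re = ∫ ω, (Y ω).re ∂μ := by
    simpa using (integral_re hY).symm
  have hYim : (∫ ω, Y ω ∂μ).im = ∫ ω, (Y ω).im ∂μ := by
    simpa using (integral_im hY).symm
  have hre : (∫ ω, X ω * Y ω ∂μ).re
      = ∫ ω, ((X ω).re * (Y ω).re - (X ω).im * (Y ω).im) ∂μ := by
    have h' := integral_re hXY
    simp only [RCLike.re_to_complex, Complex.mul_re] at h'
    exact h'.symm
  have him : (∫ ω, X ω * Y ω ∂μ).im
      = ∫ ω, ((X ω).re * (Y ω).im + (X ω).im * (Y ω).re) ∂μ := by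
    have h' := integral_im hXY
    simp only [RCLike.im_to_complex, Complex.mul_im] at h'
    exact h'.symm
  apply Complex.ext
  · rw [hre, integral_sub p_rr p_ii, e_rr, e_ii, Complex.mul_re, hXre, hXim, hYre, hYim]
  · rw [him, integral_add p_ri p_ir, e_ri, e_ir, Complex.mul_im, hXre, hXim, hYre, hYim]

/-- Covariance of the Fourier coefficients of a periodic stream with random delays
(uniform on `[0,τ)`) and uncorrelated amplitudes of variance `σ_a²`, the amplitude
vector being independent of the delay vector:
`E[X_k conj(X_{k'})] = (σ_a² L/τ²)|h_k|² δ_{k,k'}`. -/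
theorem fourier_coefficient_covariance
    {Ω : Type*} [MeasurableSpace Ω] (P : Measure Ω) [IsProbabilityMeasure P]
    (τ : ℝ) (hτ : 0 < τ) (L : ℕ) (hL : 1 ≤ L)
    (t : Fin L → Ω → ℝ) (ht_meas : ∀ l, Measurable (t l))
    (ht_unif : ∀ l, P.map (t l) =
      (ENNReal.ofReal τ)⁻¹ • (volume.restrict (Set.Ico (0 : ℝ) τ)))
    (a : Fin L → Ω → ℂ) (ha_meas : ∀ l, Measurable (a l))
    (ha_L2 : ∀ l, MemLp (a l) 2 P)
    (σa : ℝ)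
    (ha_cov : ∀ l l' : Fin L,
      (∫ ω, a l ω * (starRingEnd ℂ) (a l' ω) ∂P) =
        if l = l' then ((σa ^ 2 : ℝ) : ℂ) else 0)
    (h_indep : IndepFun (fun ω l => a l ω) (fun ω l => t l ω) P)
    (h : ℤ → ℂ)
    (X : ℤ → Ω → ℂ)
    (hX : ∀ (k : ℤ) (ω : Ω), X k ω = (1 / τ) * h k *
      ∑ l, a l ω * Complex.exp (-(2 * π * Complex.I * k * (t l ω) / τ))) :
    ∀ k k' : ℤ,
      (∫ ω, X k ω * (starRingEnd ℂ) (X k' ω) ∂P) =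
        if k = k' then ((σa ^ 2 * L / τ ^ 2 * ‖h k‖ ^ 2 : ℝ) : ℂ) else 0 := by
  intro k k'
  have hτ' : (τ : ℂ) ≠ 0 := by exact_mod_cast hτ.ne'
  -- uniform exponential integral
  have key : ∀ (m : ℤ) (l : Fin L),
      (∫ ω, Complex.exp ((2 * π * Complex.I * m / τ) * (t l ω)) ∂P)
        = if m = 0 then 1 else 0 := by
    intro m l
    set c : ℂ := 2 * π * Complex.I * m / τ with hc
    have hcont : Continuous fun x : ℝ => Complex.exp (c * x) := by fun_prop
    have : (∫ ω, Complex.exp (c * (t l ω)) ∂P)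
        = ∫ x, Complex.exp (c * x) ∂(P.map (t l)) :=
      (integral_map (ht_meas l).aemeasurable hcont.aestronglyMeasurable).symm
    rw [this, ht_unif l, integral_smul_measure, ENNReal.toReal_inv,
      ENNReal.toReal_ofReal hτ.le,
      Measure.restrict_congr_set Ico_ae_eq_Ioc,
      ← intervalIntegral.integral_of_le hτ.le]
    by_cases hm : m = 0
    · subst hm
      simp only [Int.cast_zero, mul_zero, zero_div, hc, zero_mul, Complex.exp_zero,
        if_true]
      rw [intervalIntegral.integral_const]
      simp only [Complex.ofReal_zero, sub_zero, smul_eq_mul, Complex.real_smul,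
        Complex.ofReal_inv, mul_one]
      exact inv_mul_cancel₀ hτ' 
    · have hc0 : c ≠ 0 := by
        simp only [hc, div_ne_zero_iff]
        constructor
        · simp [Complex.I_ne_zero, Real.pi_ne_zero, hm]
        · exact hτ'
      rw [_root_.integral_exp_mul_complex hc0]
      have h1 : c * (τ : ℂ) = (m : ℂ) * (2 * π * Complex.I) := by
        rw [hc, div_mul_cancel₀ _ hτ']; ring
      rw [h1, Complex.exp_int_mul_two_pi_mul_I]
      simp [hm]
  -- conjugate of X k'
  have hconjX : ∀ ω, (starRingEnd ℂ) (X k' ω) =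
      (1 / (τ : ℂ)) * (starRingEnd ℂ) (h k') *
        ∑ l', (starRingEnd ℂ) (a l' ω) *
          Complex.exp (2 * π * Complex.I * k' * (t l' ω) / τ) := by
    intro ω
    rw [hX]
    push_cast
    rw [map_mul, map_mul, map_sum]
    congr 1
    · rw [map_div₀, map_one, Complex.conj_ofReal]
    · refine Finset.sum_congr rfl fun l' _ => ?_
      rw [map_mul]
      congr 1
      rw [← Complex.exp_conj]
      congr 1
      simp only [map_neg, map_div₀, map_mul, Complex.conj_ofReal, Complex.conj_I,
        map_ofNat, map_intCast]
      ring
  -- measurability and boundedness of the exponential factors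
  have hexp_meas : ∀ (l l' : Fin L), Measurable fun ω =>
      Complex.exp (-(2 * π * Complex.I * k * (t l ω) / τ)) *
        Complex.exp (2 * π * Complex.I * k' * (t l' ω) / τ) := by
    intro l l'
    have h1 : Measurable fun ω => ((t l ω : ℂ)) :=
      Complex.measurable_ofReal.comp (ht_meas l)
    have h2 : Measurable fun ω => ((t l' ω : ℂ)) :=
      Complex.measurable_ofReal.comp (ht_meas l')
    exact ((Complex.measurable_exp.comp (((h1.const_mul _).div_const _).neg)).mul
      (Complex.measurable_exp.comp ((h2.const_mul _).div_const _)))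
  have hexp_bdd : ∀ (l l' : Fin L) (ω : Ω),
      ‖Complex.exp (-(2 * π * Complex.I * k * (t l ω) / τ)) *
        Complex.exp (2 * π * Complex.I * k' * (t l' ω) / τ)‖ ≤ 1 := by
    intro l l' ω
    rw [norm_mul]
    have e1 : -(2 * π * Complex.I * k * ((t l ω : ℂ)) / τ)
        = ((-(2 * π * k * t l ω / τ) : ℝ) : ℂ) * Complex.I := by push_cast; ring
    have e2 : 2 * π * Complex.I * k' * ((t l' ω : ℂ)) / τ
        = ((2 * π * k' * t l' ω / τ : ℝ) : ℂ) * Complex.I := by push_cast; ring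
    rw [e1, e2,
      Complex.norm_exp_ofReal_mul_I, Complex.norm_exp_ofReal_mul_I]
    norm_num
  -- integrability of the amplitude products
  have haconj_L2 : ∀ l', MemLp (fun ω => (starRingEnd ℂ) (a l' ω)) 2 P := by
    intro l'
    refine (ha_L2 l').of_le
      ((RCLike.continuous_conj.measurable.comp (ha_meas l')).aestronglyMeasurable)
      (Filter.Eventually.of_forall fun ω => by simp)
  have haprod_int : ∀ l l', Integrable (fun ω => a l ω * (starRingEnd ℂ) (a l' ω)) P := by
    intro l l'
    have := ((haconj_L2 l').smul (ha_L2 l) (p := 2) (q := 2) (r := 1))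
    rw [memLp_one_iff_integrable] at this
    exact this.congr (Filter.Eventually.of_forall fun ω => by simp [smul_eq_mul])
  -- the generic term
  set G : Fin L → Fin L → Ω → ℂ := fun l l' ω =>
    (Complex.exp (-(2 * π * Complex.I * k * (t l ω) / τ)) *
      Complex.exp (2 * π * Complex.I * k' * (t l' ω) / τ)) *
    (a l ω * (starRingEnd ℂ) (a l' ω)) with hG
  have hG_int : ∀ l l', Integrable (G l l') P := by
    intro l l'
    exact (haprod_int l l').bdd_mul (hexp_meas l l').aestronglyMeasurable
      (Filter.Eventually.of_forall (hexp_bdd l l'))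
  -- pointwise expansion
  have hexp : ∀ ω, X k ω * (starRingEnd ℂ) (X k' ω) =
      ((1 / (τ : ℂ)) * h k * ((1 / (τ : ℂ)) * (starRingEnd ℂ) (h k'))) *
        ∑ l, ∑ l', G l l' ω := by
    intro ω
    rw [hX, hconjX, mul_mul_mul_comm, Finset.sum_mul_sum]
    congr 1
    refine Finset.sum_congr rfl fun l _ => Finset.sum_congr rfl fun l' _ => ?_
    simp only [hG]
    ring
  -- split off the constant and the double sum
  have h1 : (∫ ω, X k ω * (starRingEnd ℂ) (X k' ω) ∂P) =
      ((1 / (τ : ℂ)) * h k * ((1 / (τ : ℂ)) * (starRingEnd ℂ) (h k'))) *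
        ∑ l, ∑ l', ∫ ω, G l l' ω ∂P := by
    rw [integral_congr_ae (Filter.Eventually.of_forall hexp), integral_const_mul]
    congr 1
    rw [integral_finset_sum _ (fun l _ => integrable_finset_sum _ fun l' _ => hG_int l l')]
    exact Finset.sum_congr rfl fun l _ => integral_finset_sum _ fun l' _ => hG_int l l'
  -- factor each term using independence
  have hfact : ∀ l l', (∫ ω, G l l' ω ∂P) =
      (∫ ω, Complex.exp (-(2 * π * Complex.I * k * (t l ω) / τ)) *
        Complex.exp (2 * π * Complex.I * k' * (t l' ω) / τ) ∂P) *
      (if l = l' then ((σa ^ 2 : ℝ) : ℂ) else 0) := by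
    intro l l'
    have hφa : Measurable fun v : Fin L → ℂ => v l * (starRingEnd ℂ) (v l') :=
      (measurable_pi_apply l).mul (RCLike.continuous_conj.measurable.comp (measurable_pi_apply l'))
    have hφt : Measurable fun u : Fin L → ℝ =>
        Complex.exp (-(2 * π * Complex.I * k * (u l) / τ)) *
          Complex.exp (2 * π * Complex.I * k' * (u l') / τ) := by
      have h1m : Measurable fun u : Fin L → ℝ => ((u l : ℂ)) :=
        Complex.measurable_ofReal.comp (measurable_pi_apply l)
      have h2m : Measurable fun u : Fin L → ℝ => ((u l' : ℂ)) :=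
        Complex.measurable_ofReal.comp (measurable_pi_apply l')
      exact ((Complex.measurable_exp.comp (((h1m.const_mul _).div_const _).neg)).mul
        (Complex.measurable_exp.comp ((h2m.const_mul _).div_const _)))
    have hI : IndepFun
        (fun ω => Complex.exp (-(2 * π * Complex.I * k * (t l ω) / τ)) *
          Complex.exp (2 * π * Complex.I * k' * (t l' ω) / τ))
        (fun ω => a l ω * (starRingEnd ℂ) (a l' ω)) P :=
      (h_indep.comp hφa hφt).symm
    have hexp_int : Integrable (fun ω =>
        Complex.exp (-(2 * π * Complex.I * k * (t l ω) / τ)) *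
          Complex.exp (2 * π * Complex.I * k' * (t l' ω) / τ)) P :=
      (integrable_const (1 : ℝ)).mono' (hexp_meas l l').aestronglyMeasurable
        (Filter.Eventually.of_forall (hexp_bdd l l'))
    rw [hG, ← ha_cov l l']
    exact indepFun_integral_mul_complex hI hexp_int (haprod_int l l')
  -- diagonal exponential integrals
  have hdiag : ∀ l : Fin L,
      (∫ ω, Complex.exp (-(2 * π * Complex.I * k * (t l ω) / τ)) *
        Complex.exp (2 * π * Complex.I * k' * (t l ω) / τ) ∂P)
      = if k = k' then 1 else 0 := by
    intro l
    have hpt : ∀ ω, Complex.exp (-(2 * π * Complex.I * k * (t l ω) / τ)) *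
        Complex.exp (2 * π * Complex.I * k' * (t l ω) / τ)
        = Complex.exp ((2 * π * Complex.I * ((k' - k : ℤ) : ℂ) / τ) * (t l ω)) := by
      intro ω
      rw [← Complex.exp_add]
      congr 1
      push_cast
      ring
    rw [integral_congr_ae (Filter.Eventually.of_forall hpt), key (k' - k) l]
    simp [sub_eq_zero, eq_comm]
  -- collapse the double sum
  have h2 : (∑ l, ∑ l', ∫ ω, G l l' ω ∂P)
      = (L : ℂ) * ((if k = k' then 1 else 0) * ((σa ^ 2 : ℝ) : ℂ)) := by
    have : ∀ l : Fin L, (∑ l', ∫ ω, G l l' ω ∂P)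
        = (if k = k' then 1 else 0) * ((σa ^ 2 : ℝ) : ℂ) := by
      intro l
      have : (∑ l', ∫ ω, G l l' ω ∂P)
          = ∑ l', (∫ ω, Complex.exp (-(2 * π * Complex.I * k * (t l ω) / τ)) *
              Complex.exp (2 * π * Complex.I * k' * (t l' ω) / τ) ∂P) *
            (if l = l' then ((σa ^ 2 : ℝ) : ℂ) else 0) :=
        Finset.sum_congr rfl fun l' _ => hfact l l'
      rw [this]
      simp only [mul_ite, mul_zero, Finset.sum_ite_eq, Finset.mem_univ, if_true]
      rw [hdiag l]
    rw [Finset.sum_congr rfl fun l _ => this l, Finset.sum_const, Finset.card_univ,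
      Fintype.card_fin, nsmul_eq_mul]
  rw [h1, h2]
  by_cases hkk : k = k'
  · subst hkk
    simp only [if_true]
    have hhk : (1 / (τ : ℂ)) * h k * ((1 / (τ : ℂ)) * (starRingEnd ℂ) (h k))
        = (((1 / τ ^ 2) * ‖h k‖ ^ 2 : ℝ) : ℂ) := by
      rw [mul_mul_mul_comm, Complex.mul_conj, Complex.normSq_eq_norm_sq]
      push_cast
      ring
    rw [hhk]
    push_cast
    ring
  · simp [hkk]
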